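/- Let u : ℝ≥0 → ℝ be strictly quasiconcave and attain its maximum at a unique point x⋆ ∈ ℝ≥0, let c₁ : ℝ≥0 → ℝ≥0 be strictly increasing, and let x_s ∈ ℝ≥0. Then every point x' in the interval [min{x_s, x⋆}, max{x_s, x⋆}] is maximal with respect to the one-many ordering: there is no x'' ∈ ℝ≥0 with x'' ≻ x'. -/

import Mathlib

open NNReal Set

/-- Strict quasiconcavity of a function `u : ℝ≥0 → ℝ`:
for all distinct `x, y` and all `λ ∈ (0,1)`, `u (λx + (1-λ)y) > min (u x) (u y)`. -/
def StrictQuasiconcave (u : ℝ≥0 → ℝ) : Prop :=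
  ∀ x y : ℝ≥0, x ≠ y → ∀ l : ℝ≥0, 0 < l → l < 1 →
    min (u x) (u y) < u (l * x + (1 - l) * y)

/-- The one-many ordering `x ≽ y` on `ℝ≥0`, given personal utility `u`,
cost `c₁` of current social distance, and social reference point `xs`. -/
def OneMany (u : ℝ≥0 → ℝ) (c₁ : ℝ≥0 → ℝ≥0) (xs : ℝ≥0) (x y : ℝ≥0) : Prop :=
  u y ≤ u x ∧ c₁ (nndist x xs) ≤ c₁ (nndist y xs)

/-- The strict part `x ≻ y` of the one-many ordering. -/
def OneManyStrict (u : ℝ≥0 → ℝ) (c₁ : ℝ≥0 → ℝ≥0) (xs : ℝ≥0) (x y : ℝ≥0) : Prop :=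
  OneMany u c₁ xs x y ∧ ¬ OneMany u c₁ xs y x

/-- The set `max(ℝ≥0, ≽)` of maximal elements of the one-many ordering:
the agent's consideration set. -/
def maxSet (u : ℝ≥0 → ℝ) (c₁ : ℝ≥0 → ℝ≥0) (xs : ℝ≥0) : Set ℝ≥0 :=
  {x : ℝ≥0 | ¬ ∃ y : ℝ≥0, OneManyStrict u c₁ xs y x}

lemma between_aux (a b c : ℝ≥0) (hab : a < b) (hbc : b < c) :
    ∃ l : ℝ≥0, 0 < l ∧ l < 1 ∧ l * a + (1 - l) * c = b := by
  have hac : a < c := hab.trans hbc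
  have hl1 : (c - b) / (c - a) < 1 := by
    rw [div_lt_one (tsub_pos_of_lt hac)]
    exact (tsub_lt_tsub_iff_left_of_le hbc.le).mpr hab
  refine ⟨(c - b) / (c - a), div_pos (tsub_pos_of_lt hbc) (tsub_pos_of_lt hac), hl1, ?_⟩
  apply NNReal.coe_injective
  have h1 : ((c:ℝ) - a) ≠ 0 := by
    have := NNReal.coe_lt_coe.mpr hac; linarith
  push_cast [NNReal.coe_sub hbc.le, NNReal.coe_sub hac.le, NNReal.coe_sub hl1.le,
    NNReal.coe_div]
  field_simp
  ring

section
variable (u : ℝ≥0 → ℝ) (xstar : ℝ≥0)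
    (hu : StrictQuasiconcave u)
    (hmax : ∀ y : ℝ≥0, u y ≤ u xstar)
    (huniq : ∀ y : ℝ≥0, (∀ z : ℝ≥0, u z ≤ u y) → y = xstar)

include hu hmax huniq

set_option linter.unusedSectionVars false in
lemma ne_star_lt (a : ℝ≥0) (ha : a ≠ xstar) : u a < u xstar := by
  rcases lt_or_eq_of_le (hmax a) with h | h
  · exact h
  · exact absurd (huniq a (fun z => h ▸ hmax z)) ha

lemma mono_left (a b : ℝ≥0) (hab : a < b) (hb : b ≤ xstar) : u a < u b := by
  rcases eq_or_lt_of_le hb with rfl | hlt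
  · exact ne_star_lt u b hu hmax huniq a hab.ne
  · obtain ⟨l, hl0, hl1, hcomb⟩ := between_aux a b xstar hab hlt
    have key := hu a xstar (hab.trans hlt).ne l hl0 hl1
    rw [hcomb, min_eq_left (hmax a)] at key
    exact key

lemma anti_right (a b : ℝ≥0) (ha : xstar ≤ a) (hab : a < b) : u b < u a := by
  rcases eq_or_lt_of_le ha with rfl | hlt
  · exact ne_star_lt u xstar hu hmax huniq b hab.ne'
  · obtain ⟨l, hl0, hl1, hcomb⟩ := between_aux xstar a b hlt hab
    have key := hu xstar b (hlt.trans hab).ne l hl0 hl1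
    rw [hcomb, min_eq_right (hmax b)] at key
    exact key

end

theorem maximal_inside_interval
    (u : ℝ≥0 → ℝ) (c₁ : ℝ≥0 → ℝ≥0) (xstar xs : ℝ≥0)
    (hu : StrictQuasiconcave u)
    (hmax : ∀ y : ℝ≥0, u y ≤ u xstar)
    (huniq : ∀ y : ℝ≥0, (∀ z : ℝ≥0, u z ≤ u y) → y = xstar)
    (hc : StrictMono c₁) :
    ∀ x' ∈ Icc (min xs xstar) (max xs xstar),
      ¬ ∃ x'' : ℝ≥0, OneManyStrict u c₁ xs x'' x' := by
  rintro x' hx' ⟨x'', ⟨⟨hu1, hc1⟩, hnot⟩⟩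
  have hd : nndist x'' xs ≤ nndist x' xs := hc.le_iff_le.mp hc1
  rcases le_total xs xstar with hso | hso
  · -- xs ≤ x' ≤ xstar
    have h1 : xs ≤ x' := (min_eq_left hso) ▸ hx'.1
    have h2 : x' ≤ xstar := hx'.2.trans (max_le hso le_rfl)
    have hdx' : nndist x' xs = x' - xs := by
      simp [NNReal.nndist_eq, tsub_eq_zero_of_le h1]
    have hx''le : x'' ≤ x' := by
      rcases le_total x'' xs with h | h
      · exact h.trans h1
      · have hsub : x'' - xs ≤ x' - xs := by
          calc x'' - xs ≤ nndist x'' xs := by rw [NNReal.nndist_eq]; exact le_max_left _ _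
            _ ≤ x' - xs := hdx' ▸ hd
        calc x'' ≤ x'' - xs + xs := (tsub_add_cancel_of_le h).ge
          _ ≤ x' - xs + xs := add_le_add hsub le_rfl
          _ = x' := tsub_add_cancel_of_le h1
    rcases eq_or_lt_of_le hx''le with rfl | hlt
    · exact hnot ⟨le_rfl, le_rfl⟩
    · exact absurd hu1 (not_le.mpr (mono_left u xstar hu hmax huniq x'' x' hlt h2))
  · -- xstar ≤ x' ≤ xs
    have h1 : x' ≤ xs := hx'.2.trans (max_le le_rfl hso)
    have h2 : xstar ≤ x' := (min_eq_right hso) ▸ hx'.1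
    have hdx' : nndist x' xs = xs - x' := by
      simp [NNReal.nndist_eq, tsub_eq_zero_of_le h1]
    have hx''le : x' ≤ x'' := by
      rcases le_total xs x'' with h | h
      · exact h1.trans h
      · have hsub : xs - x'' ≤ xs - x' := by
          calc xs - x'' ≤ nndist x'' xs := by rw [NNReal.nndist_eq]; exact le_max_right _ _
            _ ≤ xs - x' := hdx' ▸ hd
        exact (tsub_le_tsub_iff_left h1).mp hsub
    rcases eq_or_lt_of_le hx''le with rfl | hlt
    · exact hnot ⟨le_rfl, le_rfl⟩
    · exact absurd hu1 (not_le.mpr (anti_right u xstar hu hmax huniq x' x'' h2 hlt))
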